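/- For a signed permutation σ in the hyperoctahedral group B_n, the odd length L_B(σ) := (1/2)|{(i,j) ∈ [-n,n]² : i < j, σ(i) > σ(j), i ≢ j (mod 2)}| equals oinv(σ) + oneg(σ) + onsp(σ), where oinv(σ) = |{(i,j) ∈ [n]² : i<j, σ(i)>σ(j), i ≢ j (mod 2)}|, oneg(σ) = |{i ∈ [n] : σ(i)<0, i odd}|, and onsp(σ) = |{(i,j) ∈ [n]² : σ(i)+σ(j)<0, i ≢ j (mod 2)}|. -/

import Mathlib

open Finset Polynomial
open scoped Classical

/-- `σ` is (the natural extension of) an element of the hyperoctahedral group `B_n`: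
a permutation of `ℤ` satisfying `σ(-j) = -σ(j)` and fixing all `j` with `|j| > n`. -/
def IsB (n : ℕ) (σ : Equiv.Perm ℤ) : Prop :=
  (∀ j : ℤ, σ (-j) = - σ j) ∧ (∀ j : ℤ, (n : ℤ) < |j| → σ j = j)

/-- The Coxeter length of `σ ∈ B_n`:
`ℓ(σ) = (1/2)|{(i,j) ∈ [-n,n]² : i < j, σ(i) > σ(j)}|`. -/
noncomputable def ellB (n : ℕ) (σ : Equiv.Perm ℤ) : ℕ :=
  (((Finset.Icc (-(n : ℤ)) (n : ℤ)) ×ˢ (Finset.Icc (-(n : ℤ)) (n : ℤ))).filter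
    (fun p => p.1 < p.2 ∧ σ p.2 < σ p.1)).card / 2

/-- The odd length on `B_n`:
`L(σ) = (1/2)|{(i,j) ∈ [-n,n]² : i < j, σ(i) > σ(j), i ≢ j (mod 2)}|`. -/
noncomputable def oddLB (n : ℕ) (σ : Equiv.Perm ℤ) : ℕ :=
  (((Finset.Icc (-(n : ℤ)) (n : ℤ)) ×ˢ (Finset.Icc (-(n : ℤ)) (n : ℤ))).filter
    (fun p => p.1 < p.2 ∧ σ p.2 < σ p.1 ∧ p.1 % 2 ≠ p.2 % 2)).card / 2

/-- Membership in the right quotient `B_n^J`, `J ⊆ [0,n-1]`: no descent at any `j ∈ J`,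
i.e. `σ(j) < σ(j+1)` for all `j ∈ J`. -/
def inQuotB (J : Finset ℕ) (σ : Equiv.Perm ℤ) : Prop :=
  ∀ j ∈ J, σ (j : ℤ) < σ ((j : ℤ) + 1)

/-- Signed generating function `∑ (-1)^{ℓ(σ)} x^{L(σ)}` over the elements of `B_n`
satisfying `P` (a finite sum, via `finsum`). -/
noncomputable def gfB (n : ℕ) (P : Equiv.Perm ℤ → Prop) : Polynomial ℤ :=
  ∑ᶠ (σ : Equiv.Perm ℤ) (_ : IsB n σ ∧ P σ),
    (-1 : Polynomial ℤ) ^ (ellB n σ) * X ^ (oddLB n σ)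

/-- `oinv(σ) = |{(i,j) ∈ [n]² : i < j, σ(i) > σ(j), i ≢ j (mod 2)}|`. -/
noncomputable def oinv (n : ℕ) (σ : Equiv.Perm ℤ) : ℕ :=
  (((Finset.Icc (1 : ℤ) (n : ℤ)) ×ˢ (Finset.Icc (1 : ℤ) (n : ℤ))).filter
    (fun p => p.1 < p.2 ∧ σ p.2 < σ p.1 ∧ p.1 % 2 ≠ p.2 % 2)).card

/-- `oneg(σ) = |{i ∈ [n] : σ(i) < 0, i odd}|`. -/
noncomputable def oneg (n : ℕ) (σ : Equiv.Perm ℤ) : ℕ :=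
  ((Finset.Icc (1 : ℤ) (n : ℤ)).filter (fun i => σ i < 0 ∧ i % 2 = 1)).card

/-- `onsp(σ) = |{(i,j) ∈ [n]² : i < j, σ(i) + σ(j) < 0, i ≢ j (mod 2)}|`
(pairs counted unordered). -/
noncomputable def onsp (n : ℕ) (σ : Equiv.Perm ℤ) : ℕ :=
  (((Finset.Icc (1 : ℤ) (n : ℤ)) ×ˢ (Finset.Icc (1 : ℤ) (n : ℤ))).filter
    (fun p => p.1 < p.2 ∧ σ p.1 + σ p.2 < 0 ∧ p.1 % 2 ≠ p.2 % 2)).card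

/-- Proposition 5.1. For `σ ∈ B_n`,
`L_B(σ) = oinv(σ) + oneg(σ) + onsp(σ)`. -/
theorem statement1 (n : ℕ) (σ : Equiv.Perm ℤ) (h : IsB n σ) :
    oddLB n σ = oinv n σ + oneg n σ + onsp n σ := by
  obtain ⟨h1, h2⟩ := h
  have hσ0 : σ 0 = 0 := by
    have := h1 0; simp only [neg_zero] at this; linarith
  set S := (((Finset.Icc (-(n : ℤ)) (n : ℤ)) ×ˢ (Finset.Icc (-(n : ℤ)) (n : ℤ))).filter
    (fun p => p.1 < p.2 ∧ σ p.2 < σ p.1 ∧ p.1 % 2 ≠ p.2 % 2)) with hSdef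
  have hmem : ∀ p : ℤ × ℤ, p ∈ S ↔
      ((-(n:ℤ) ≤ p.1 ∧ p.1 ≤ n) ∧ (-(n:ℤ) ≤ p.2 ∧ p.2 ≤ n)) ∧
      p.1 < p.2 ∧ σ p.2 < σ p.1 ∧ p.1 % 2 ≠ p.2 % 2 := by
    intro p
    simp [hSdef, Finset.mem_filter, Finset.mem_product, Finset.mem_Icc]
  -- partition
  have e1 := Finset.card_filter_add_card_filter_not (s := S)
    (fun p : ℤ × ℤ => 0 < p.1)
  have e2 := Finset.card_filter_add_card_filter_not
    (s := S.filter (fun p : ℤ × ℤ => ¬ 0 < p.1)) (fun p : ℤ × ℤ => p.1 = 0)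
  have e3 := Finset.card_filter_add_card_filter_not
    (s := (S.filter (fun p : ℤ × ℤ => ¬ 0 < p.1)).filter (fun p : ℤ × ℤ => ¬ p.1 = 0))
    (fun p : ℤ × ℤ => p.2 = 0)
  have e4 := Finset.card_filter_add_card_filter_not
    (s := ((S.filter (fun p : ℤ × ℤ => ¬ 0 < p.1)).filter
      (fun p : ℤ × ℤ => ¬ p.1 = 0)).filter (fun p : ℤ × ℤ => ¬ p.2 = 0))
    (fun p : ℤ × ℤ => p.2 < 0)
  have e5 := Finset.card_filter_add_card_filter_not
    (s := (((S.filter (fun p : ℤ × ℤ => ¬ 0 < p.1)).filter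
      (fun p : ℤ × ℤ => ¬ p.1 = 0)).filter (fun p : ℤ × ℤ => ¬ p.2 = 0)).filter
      (fun p : ℤ × ℤ => ¬ p.2 < 0))
    (fun p : ℤ × ℤ => -p.1 < p.2)
  -- c1 : positive-positive pairs give oinv
  have c1 : (S.filter (fun p : ℤ × ℤ => 0 < p.1)).card = oinv n σ := by
    apply Finset.card_nbij' (fun p => p) (fun p => p)
    · intro p hp
      simp only [Finset.mem_coe, Finset.mem_filter, hmem, oinv, Finset.mem_product, Finset.mem_Icc, and_true, true_and] at hp ⊢
      omega
    · intro p hp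
      simp only [Finset.mem_coe, Finset.mem_filter, hmem, oinv, Finset.mem_product, Finset.mem_Icc, and_true, true_and] at hp ⊢
      omega
    · intro p _; rfl
    · intro p _; rfl
  -- c2 : p.1 = 0 gives oneg
  have c2 : ((S.filter (fun p : ℤ × ℤ => ¬ 0 < p.1)).filter
      (fun p : ℤ × ℤ => p.1 = 0)).card = oneg n σ := by
    apply Finset.card_nbij' (fun p => p.2) (fun j => (0, j))
    · intro p hp
      simp only [Finset.mem_coe, Finset.mem_filter, hmem, oneg, Finset.mem_Icc, and_true, true_and] at hp ⊢
      have h0 : σ p.1 = σ 0 := by rw [hp.2]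
      omega
    · intro j hj
      simp only [Finset.mem_coe, Finset.mem_filter, hmem, oneg, Finset.mem_Icc, and_true, true_and] at hj ⊢
      omega
    · rintro ⟨p1, p2⟩ hp
      simp only [Finset.mem_coe, Finset.mem_filter] at hp
      have h0 : p1 = 0 := hp.2
      simp [h0]
    · intro j _; rfl
  -- c3 : p.2 = 0 (and p.1 < 0) gives oneg
  have c3 : (((S.filter (fun p : ℤ × ℤ => ¬ 0 < p.1)).filter
      (fun p : ℤ × ℤ => ¬ p.1 = 0)).filter (fun p : ℤ × ℤ => p.2 = 0)).card = oneg n σ := by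
    apply Finset.card_nbij' (fun p => -p.1) (fun i => (-i, 0))
    · intro p hp
      simp only [Finset.mem_coe, Finset.mem_filter, hmem, oneg, Finset.mem_Icc, and_true, true_and] at hp ⊢
      have h0 : σ p.2 = σ 0 := by rw [hp.2]
      have ha := h1 p.1
      omega
    · intro i hi
      simp only [Finset.mem_coe, Finset.mem_filter, hmem, oneg, Finset.mem_Icc, and_true, true_and] at hi ⊢
      have ha := h1 i
      omega
    · rintro ⟨p1, p2⟩ hp
      simp only [Finset.mem_coe, Finset.mem_filter] at hp
      have h0 : p2 = 0 := hp.2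
      simp [h0]
    · intro i _; simp
  -- c5 : negative-negative pairs give oinv
  have c5 : ((((S.filter (fun p : ℤ × ℤ => ¬ 0 < p.1)).filter
      (fun p : ℤ × ℤ => ¬ p.1 = 0)).filter (fun p : ℤ × ℤ => ¬ p.2 = 0)).filter
      (fun p : ℤ × ℤ => p.2 < 0)).card = oinv n σ := by
    apply Finset.card_nbij' (fun p => (-p.2, -p.1)) (fun q => (-q.2, -q.1))
    · intro p hp
      simp only [Finset.mem_coe, Finset.mem_filter, hmem, oinv, Finset.mem_product, Finset.mem_Icc, and_true, true_and] at hp ⊢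
      have ha := h1 p.1
      have hb := h1 p.2
      omega
    · intro q hq
      simp only [Finset.mem_coe, Finset.mem_filter, hmem, oinv, Finset.mem_product, Finset.mem_Icc, and_true, true_and] at hq ⊢
      have ha := h1 q.1
      have hb := h1 q.2
      omega
    · intro p _; simp
    · intro q _; simp
  -- c4a : mixed pairs with -p.1 < p.2 give onsp
  have c4a : (((((S.filter (fun p : ℤ × ℤ => ¬ 0 < p.1)).filter
      (fun p : ℤ × ℤ => ¬ p.1 = 0)).filter (fun p : ℤ × ℤ => ¬ p.2 = 0)).filter
      (fun p : ℤ × ℤ => ¬ p.2 < 0)).filter (fun p : ℤ × ℤ => -p.1 < p.2)).card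
      = onsp n σ := by
    apply Finset.card_nbij' (fun p => (-p.1, p.2)) (fun q => (-q.1, q.2))
    · intro p hp
      simp only [Finset.mem_coe, Finset.mem_filter, hmem, onsp, Finset.mem_product, Finset.mem_Icc, and_true, true_and] at hp ⊢
      have ha := h1 p.1
      omega
    · intro q hq
      simp only [Finset.mem_coe, Finset.mem_filter, hmem, onsp, Finset.mem_product, Finset.mem_Icc, and_true, true_and] at hq ⊢
      have ha := h1 q.1
      omega
    · intro p _; simp
    · intro q _; simp
  -- c4b : mixed pairs with p.2 < -p.1 give onsp
  have c4b : (((((S.filter (fun p : ℤ × ℤ => ¬ 0 < p.1)).filter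
      (fun p : ℤ × ℤ => ¬ p.1 = 0)).filter (fun p : ℤ × ℤ => ¬ p.2 = 0)).filter
      (fun p : ℤ × ℤ => ¬ p.2 < 0)).filter (fun p : ℤ × ℤ => ¬ -p.1 < p.2)).card
      = onsp n σ := by
    apply Finset.card_nbij' (fun p => (p.2, -p.1)) (fun q => (-q.2, q.1))
    · intro p hp
      simp only [Finset.mem_coe, Finset.mem_filter, hmem, onsp, Finset.mem_product, Finset.mem_Icc, and_true, true_and] at hp ⊢
      have ha := h1 p.1
      omega
    · intro q hq
      simp only [Finset.mem_coe, Finset.mem_filter, hmem, onsp, Finset.mem_product, Finset.mem_Icc, and_true, true_and] at hq ⊢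
      have ha := h1 q.2
      omega
    · intro p _; simp
    · intro q _; simp
  have key : S.card = 2 * (oinv n σ + oneg n σ + onsp n σ) := by
    omega
  have hodd : oddLB n σ = S.card / 2 := rfl
  rw [hodd, key]
  omega
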